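/- (Theorem 2: Schwarz–Pick-type lemma for self-maps of the spectral unit ball) Let G : Ω_n → Ω_n be holomorphic (n ≥ 2) and let d_G be the degree of the minimal polynomial of G(0). Then for every X ∈ Ω_n: r(G(X)) ≤ (r(X)^{1/d_G} + r(G(0))) / (1 + r(G(0))·r(X)^{1/d_G}). -/

import Mathlib

attribute [local instance] Matrix.normedAddCommGroup Matrix.normedSpace

/-- The spectral radius of a complex `n × n` matrix. -/
noncomputable def sRad {n : ℕ} (A : Matrix (Fin n) (Fin n) ℂ) : ℝ :=
  sSup ((fun μ => ‖μ‖) '' spectrum ℂ A)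

/-- The spectral unit ball `Ω_n`. -/
def specBall (n : ℕ) : Set (Matrix (Fin n) (Fin n) ℂ) := {W | sRad W < 1}

open Polynomial Matrix

namespace SpecAux

variable {n : ℕ}

local notation "Mat" => Matrix (Fin n) (Fin n) ℂ

lemma eval_charpoly (V : Mat) (x : ℂ) :
    V.charpoly.eval x = (x • (1 : Mat) - V).det := by
  have h : (charmatrix V).map (evalRingHom x) = x • (1 : Mat) - V := by
    ext i j
    by_cases hij : i = j
    · subst hij
      simp [charmatrix_apply_eq, Matrix.smul_apply, Matrix.one_apply, Matrix.sub_apply]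
    · simp [charmatrix_apply_ne _ _ _ hij, Matrix.smul_apply, Matrix.one_apply_ne hij,
        Matrix.sub_apply, hij]
  rw [Matrix.charpoly, ← h, ← RingHom.mapMatrix_apply, ← RingHom.map_det]
  rfl

lemma mem_spectrum_iff_det (V : Mat) (μ : ℂ) :
    μ ∈ spectrum ℂ V ↔ (μ • (1 : Mat) - V).det = 0 := by
  rw [spectrum.mem_iff, Algebra.algebraMap_eq_smul_one]
  rw [Matrix.isUnit_iff_isUnit_det, isUnit_iff_ne_zero, not_not]

lemma mem_spectrum_iff_root (V : Mat) (μ : ℂ) :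
    μ ∈ spectrum ℂ V ↔ V.charpoly.IsRoot μ := by
  rw [mem_spectrum_iff_det, IsRoot, eval_charpoly]

lemma mem_spectrum_iff_det' (V : Mat) (μ : ℂ) :
    μ ∈ spectrum ℂ V ↔ (V - μ • (1 : Mat)).det = 0 := by
  rw [mem_spectrum_iff_det]
  constructor <;> intro h
  · rw [← neg_sub, Matrix.det_neg, h, mul_zero]
  · rw [← neg_sub, Matrix.det_neg, h, mul_zero]

lemma spectrum_finite (V : Mat) : (spectrum ℂ V).Finite := by
  rcases Nat.eq_zero_or_pos n with h0 | h0
  · subst h0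
    refine Set.Finite.subset (Set.finite_singleton 0) ?_
    intro μ hμ
    rw [mem_spectrum_iff_det] at hμ
    simp [Matrix.det_fin_zero] at hμ
  · haveI : Nonempty (Fin n) := Fin.pos_iff_nonempty.mp h0
    refine Set.Finite.subset (finite_setOf_isRoot (p := V.charpoly) (V.charpoly_monic).ne_zero) ?_
    intro μ hμ
    exact (mem_spectrum_iff_root V μ).mp hμ

lemma spectrum_nonempty (hn : 0 < n) (V : Mat) : (spectrum ℂ V).Nonempty := by
  haveI : Nonempty (Fin n) := Fin.pos_iff_nonempty.mp hn
  have hdeg : 0 < V.charpoly.degree := by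
    rw [Matrix.charpoly_degree_eq_dim]
    simp only [Fintype.card_fin]
    exact_mod_cast hn
  obtain ⟨μ, hμ⟩ := Complex.exists_root hdeg
  exact ⟨μ, (mem_spectrum_iff_root V μ).mpr hμ⟩

lemma norm_le_sRad {V : Mat} {μ : ℂ} (h : μ ∈ spectrum ℂ V) : ‖μ‖ ≤ sRad V :=
  le_csSup (((spectrum_finite V).image _).bddAbove) ⟨μ, h, rfl⟩

lemma sRad_nonneg (hn : 0 < n) (V : Mat) : 0 ≤ sRad V := by
  obtain ⟨μ, hμ⟩ := spectrum_nonempty hn V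
  exact le_trans (norm_nonneg μ) (norm_le_sRad hμ)

lemma sRad_le {V : Mat} {B : ℝ} (hB : 0 ≤ B) (h : ∀ μ ∈ spectrum ℂ V, ‖μ‖ ≤ B) :
    sRad V ≤ B := by
  refine Real.sSup_le ?_ hB
  rintro x ⟨μ, hμ, rfl⟩
  exact h μ hμ

lemma norm_lt_one_of_sRad_lt_one {V : Mat} (h : sRad V < 1) {μ : ℂ}
    (hμ : μ ∈ spectrum ℂ V) : ‖μ‖ < 1 :=
  lt_of_le_of_lt (norm_le_sRad hμ) h

lemma sRad_lt_one (hn : 0 < n) {V : Mat} (h : ∀ μ ∈ spectrum ℂ V, ‖μ‖ < 1) :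
    sRad V < 1 := by
  have hmem : sRad V ∈ (fun μ => ‖μ‖) '' spectrum ℂ V := by
    refine Set.Nonempty.csSup_mem ?_ ?_
    · exact (spectrum_nonempty hn V).image _
    · exact (spectrum_finite V).image _
  obtain ⟨μ, hμ, hval⟩ := hmem
  rw [← hval]
  exact h μ hμ

end SpecAux
namespace SpecAux

variable {n : ℕ}

local notation "Mat" => Matrix (Fin n) (Fin n) ℂ

lemma det_aeval_C_mul_prod (V : Mat) (l : ℂ) (s : Multiset ℂ) :
    (Polynomial.aeval V (C l * (s.map fun a => X - C a).prod)).det =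
      l ^ n * (s.map fun a => (V - a • (1 : Mat)).det).prod := by
  induction s using Multiset.induction_on with
  | empty =>
      simp [Algebra.algebraMap_eq_smul_one, Matrix.det_smul]
  | cons a t ih =>
      rw [Multiset.map_cons, Multiset.prod_cons, Multiset.map_cons, Multiset.prod_cons]
      have : C l * ((X - C a) * (t.map fun a => X - C a).prod)
          = (X - C a) * (C l * (t.map fun a => X - C a).prod) := by ring
      rw [this, _root_.map_mul, Matrix.det_mul, ih]
      have ha : (Polynomial.aeval V (X - C a)) = V - a • (1 : Mat) := by
        simp [Algebra.algebraMap_eq_smul_one]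
      rw [ha]
      ring

lemma det_aeval (V : Mat) {g : ℂ[X]} (hg : g ≠ 0) :
    (Polynomial.aeval V g).det =
      g.leadingCoeff ^ n * (g.roots.map fun β => (V - β • (1 : Mat)).det).prod := by
  conv_lhs => rw [(IsAlgClosed.splits g).eq_prod_roots]
  exact det_aeval_C_mul_prod V _ _

lemma pow_mem_spectrum_pow {V : Mat} {μ : ℂ} (h : μ ∈ spectrum ℂ V) (j : ℕ) :
    μ ^ j ∈ spectrum ℂ (V ^ j) := by
  rw [mem_spectrum_iff_det'] at h ⊢
  have hdvd : (X - C μ) ∣ (X ^ j - C (μ ^ j)) := by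
    apply dvd_iff_isRoot.mpr
    simp [IsRoot]
  obtain ⟨h', hh'⟩ := hdvd
  have : V ^ j - (μ ^ j) • (1 : Mat) = Polynomial.aeval V (X ^ j - C (μ ^ j)) := by
    simp [Algebra.algebraMap_eq_smul_one, _root_.smul_pow]
  rw [this, hh', _root_.map_mul]
  have ha : (Polynomial.aeval V (X - C μ)) = V - μ • (1 : Mat) := by
    simp [Algebra.algebraMap_eq_smul_one]
  rw [Matrix.det_mul, ha, h, zero_mul]

lemma exists_of_mem_spectrum_pow {V : Mat} {ν : ℂ} {j : ℕ} (hj : j ≠ 0)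
    (h : ν ∈ spectrum ℂ (V ^ j)) : ∃ ω ∈ spectrum ℂ V, ω ^ j = ν := by
  have hmon : (X ^ j - C ν : ℂ[X]).Monic := monic_X_pow_sub_C ν hj
  have hne : (X ^ j - C ν : ℂ[X]) ≠ 0 := hmon.ne_zero
  have hdet : (Polynomial.aeval V (X ^ j - C ν)).det = 0 := by
    have : Polynomial.aeval V (X ^ j - C ν) = V ^ j - ν • (1 : Mat) := by
      simp [Algebra.algebraMap_eq_smul_one]
    rw [this, ← mem_spectrum_iff_det']
    exact h
  rw [det_aeval V hne] at hdet
  have hlc : (X ^ j - C ν : ℂ[X]).leadingCoeff = 1 := hmon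
  rw [hlc, one_pow, one_mul] at hdet
  rw [Multiset.prod_eq_zero_iff] at hdet
  obtain ⟨β, hβroot, hβdet⟩ := Multiset.mem_map.mp hdet
  refine ⟨β, ?_, ?_⟩
  · rw [mem_spectrum_iff_det']
    exact hβdet
  · have := isRoot_of_mem_roots hβroot
    simpa [IsRoot, sub_eq_zero] using this

lemma smul_mem_spectrum_smul {V : Mat} {μ u : ℂ} (hu : u ≠ 0) :
    μ ∈ spectrum ℂ V ↔ u * μ ∈ spectrum ℂ (u • V) := by
  rw [mem_spectrum_iff_det, mem_spectrum_iff_det]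
  have : (u * μ) • (1 : Mat) - u • V = u • (μ • (1 : Mat) - V) := by
    rw [smul_sub, smul_smul]
  rw [this, Matrix.det_smul]
  simp only [Fintype.card_fin, mul_eq_zero, pow_eq_zero_iff', hu, false_and, false_or]

end SpecAux
namespace SpecAux

variable {n : ℕ}

local notation "Mat" => Matrix (Fin n) (Fin n) ℂ

lemma multiset_norm_prod (t : Multiset ℂ) : ‖t.prod‖ = (t.map fun z => ‖z‖).prod := by
  induction t using Multiset.induction_on with
  | empty => simp
  | cons a s ih => simp [norm_mul, ih]

lemma multiset_prod_nonneg {t : Multiset ℝ} (h : ∀ x ∈ t, 0 ≤ x) : 0 ≤ t.prod := by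
  induction t using Multiset.induction_on with
  | empty => simp
  | cons a s ih =>
      rw [Multiset.prod_cons]
      exact mul_nonneg (h a (Multiset.mem_cons_self a s))
        (ih fun x hx => h x (Multiset.mem_cons_of_mem hx))

lemma multiset_prod_le_pow_card {t : Multiset ℝ} {B : ℝ}
    (h : ∀ x ∈ t, 0 ≤ x ∧ x ≤ B) : t.prod ≤ B ^ Multiset.card t := by
  induction t using Multiset.induction_on with
  | empty => simp
  | cons a s ih =>
      rw [Multiset.prod_cons, Multiset.card_cons, pow_succ, mul_comm (B ^ Multiset.card s) B]
      have ha := h a (Multiset.mem_cons_self a s)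
      have hs : ∀ x ∈ s, 0 ≤ x ∧ x ≤ B := fun x hx => h x (Multiset.mem_cons_of_mem hx)
      exact mul_le_mul ha.2 (ih hs) (multiset_prod_nonneg fun x hx => (hs x hx).1)
        (le_trans ha.1 ha.2)

lemma multiset_prod_lt_one {t : Multiset ℝ} (hne : t ≠ 0)
    (h : ∀ x ∈ t, 0 ≤ x ∧ x < 1) : t.prod < 1 := by
  induction t using Multiset.induction_on with
  | empty => exact absurd rfl hne
  | cons a s ih =>
      rw [Multiset.prod_cons]
      have ha := h a (Multiset.mem_cons_self a s)
      have hs : ∀ x ∈ s, 0 ≤ x ∧ x < 1 := fun x hx => h x (Multiset.mem_cons_of_mem hx)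
      have hsle : s.prod ≤ 1 := by
        rcases eq_or_ne s 0 with rfl | hs0
        · simp
        · exact le_of_lt (ih hs0 hs)
      have hsnn : 0 ≤ s.prod := multiset_prod_nonneg fun x hx => (hs x hx).1
      calc a * s.prod ≤ a * 1 := by
            exact mul_le_mul_of_nonneg_left hsle ha.1
        _ = a := mul_one a
        _ < 1 := ha.2

lemma pow_card_le_multiset_prod {t : Multiset ℝ} {c : ℝ} (hc : 0 ≤ c)
    (h : ∀ x ∈ t, c ≤ x) : c ^ Multiset.card t ≤ t.prod := by
  induction t using Multiset.induction_on with
  | empty => simp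
  | cons a s ih =>
      rw [Multiset.prod_cons, Multiset.card_cons, pow_succ, mul_comm (c ^ Multiset.card s) c]
      have ha := h a (Multiset.mem_cons_self a s)
      have hs : ∀ x ∈ s, c ≤ x := fun x hx => h x (Multiset.mem_cons_of_mem hx)
      exact mul_le_mul ha (ih hs) (pow_nonneg hc _) (le_trans hc ha)

lemma charpoly_coeff_norm_le (hn : 0 < n) {V : Mat} {B : ℝ}
    (hspec : ∀ μ ∈ spectrum ℂ V, ‖μ‖ ≤ B) {i : ℕ} (hi : i < n) :
    ‖V.charpoly.coeff i‖ ≤ (n.choose (n - i)) * B ^ (n - i) := by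
  haveI : Nonempty (Fin n) := Fin.pos_iff_nonempty.mp hn
  have hmon := V.charpoly_monic
  have hdeg : V.charpoly.natDegree = n := by
    simpa using V.charpoly_natDegree_eq_dim
  have hcard : Multiset.card V.charpoly.roots = n := by
    have h2 : Multiset.card V.charpoly.roots = V.charpoly.natDegree :=
      (splits_iff_card_roots.mp (IsAlgClosed.splits _))
    rw [hdeg] at h2
    exact h2
  have hroots : ∀ μ ∈ V.charpoly.roots, ‖μ‖ ≤ B := fun μ hμ =>
    hspec μ ((mem_spectrum_iff_root V μ).mpr (isRoot_of_mem_roots hμ))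
  have hB : 0 ≤ B := by
    have : (0:ℂ) ^ 1 = 0 := by norm_num
    -- B ≥ 0 because roots multiset is nonempty (card = n > 0)
    obtain ⟨μ, hμ⟩ := Multiset.card_pos_iff_exists_mem.mp (by rw [hcard]; exact hn)
    exact le_trans (norm_nonneg μ) (hroots μ hμ)
  have hcoeff : V.charpoly.coeff i
      = (-1) ^ (n - i) * V.charpoly.roots.esymm (n - i) := by
    conv_lhs => rw [(IsAlgClosed.splits _).eq_prod_roots_of_monic hmon]
    rw [Multiset.prod_X_sub_C_coeff _ (by rw [hcard]; omega), hcard]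
  rw [hcoeff, norm_mul, norm_pow, norm_neg, norm_one, one_pow, one_mul]
  rw [Multiset.esymm]
  refine le_trans (norm_multiset_sum_le _) ?_
  rw [Multiset.map_map]
  have hle : ∀ x ∈ (V.charpoly.roots.powersetCard (n - i)).map
      (fun t => ‖Multiset.prod t‖), x ≤ B ^ (n - i) := by
    intro x hx
    obtain ⟨t, ht, rfl⟩ := Multiset.mem_map.mp hx
    obtain ⟨hts, htc⟩ := (Multiset.mem_powersetCard).mp ht
    rw [multiset_norm_prod]
    have : B ^ (n - i) = B ^ Multiset.card (t.map fun z => ‖z‖) := by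
      rw [Multiset.card_map, htc]
    rw [this]
    refine multiset_prod_le_pow_card ?_
    intro x hx
    obtain ⟨μ, hμ, rfl⟩ := Multiset.mem_map.mp hx
    exact ⟨norm_nonneg μ, hroots μ (Multiset.mem_of_le hts hμ)⟩
  refine le_trans (Multiset.sum_le_card_nsmul _ _ hle) ?_
  rw [Multiset.card_map, Multiset.card_powersetCard, hcard, nsmul_eq_mul]

end SpecAux
namespace SpecAux

variable {n : ℕ}

local notation "Mat" => Matrix (Fin n) (Fin n) ℂ

variable {s : Set ℂ}

lemma diffOn_matrix_iff {W : ℂ → Mat} :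
    DifferentiableOn ℂ W s ↔ ∀ i j, DifferentiableOn ℂ (fun z => W z i j) s := by
  exact (differentiableOn_pi (Φ := W)).trans (forall_congr' fun i => differentiableOn_pi)

lemma diffOn_det {W : ℂ → Mat} (hW : DifferentiableOn ℂ W s) :
    DifferentiableOn ℂ (fun z => (W z).det) s := by
  have h : (fun z => (W z).det)
      = fun z => ∑ σ : Equiv.Perm (Fin n), ((Equiv.Perm.sign σ : ℤ) : ℂ) *
        ∏ i, W z (σ i) i := by
    funext z
    rw [Matrix.det_apply']
  rw [h]
  refine DifferentiableOn.fun_sum fun σ _ => ?_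
  refine DifferentiableOn.const_mul ?_ _
  -- product of entries
  classical
  induction (Finset.univ : Finset (Fin n)) using Finset.induction_on with
  | empty => simpa using differentiableOn_const 1
  | insert _ _ hx ih =>
      rename_i a t
      have : (fun z => ∏ i ∈ insert a t, W z (σ i) i)
          = fun z => (W z (σ a) a) * ∏ i ∈ t, W z (σ i) i := by
        funext z
        rw [Finset.prod_insert hx]
      rw [this]
      exact (diffOn_matrix_iff.mp hW _ _).mul ih

lemma diffOn_mul {W V : ℂ → Mat} (hW : DifferentiableOn ℂ W s)
    (hV : DifferentiableOn ℂ V s) : DifferentiableOn ℂ (fun z => W z * V z) s := by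
  rw [diffOn_matrix_iff]
  intro i j
  have h : (fun z => (W z * V z) i j) = fun z => ∑ k, W z i k * V z k j := by
    funext z
    rw [Matrix.mul_apply]
  rw [h]
  exact DifferentiableOn.fun_sum fun k _ =>
    (diffOn_matrix_iff.mp hW _ _).mul (diffOn_matrix_iff.mp hV _ _)

lemma diffOn_pow {W : ℂ → Mat} (hW : DifferentiableOn ℂ W s) (j : ℕ) :
    DifferentiableOn ℂ (fun z => (W z) ^ j) s := by
  induction j with
  | zero => simpa using differentiableOn_const (1 : Mat)
  | succ m ih =>
      have h : (fun z => (W z) ^ (m + 1)) = fun z => (W z) ^ m * W z := by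
        funext z; rw [pow_succ]
      rw [h]
      exact diffOn_mul ih hW

lemma diffOn_smul_mat {c : ℂ → ℂ} {W : ℂ → Mat} (hc : DifferentiableOn ℂ c s)
    (hW : DifferentiableOn ℂ W s) : DifferentiableOn ℂ (fun z => c z • W z) s :=
  hc.smul hW

lemma diffOn_aeval {W : ℂ → Mat} (hW : DifferentiableOn ℂ W s) (p : ℂ[X]) :
    DifferentiableOn ℂ (fun z => Polynomial.aeval (W z) p) s := by
  have h : (fun z => Polynomial.aeval (W z) p)
      = fun z => ∑ i ∈ Finset.range (p.natDegree + 1), p.coeff i • (W z) ^ i := by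
    funext z
    rw [aeval_eq_sum_range]
  rw [h]
  exact DifferentiableOn.fun_sum fun i _ => (diffOn_pow hW i).fun_const_smul _

lemma diffOn_adjugate {W : ℂ → Mat} (hW : DifferentiableOn ℂ W s) :
    DifferentiableOn ℂ (fun z => (W z).adjugate) s := by
  rw [diffOn_matrix_iff]
  intro i j
  have h : (fun z => (W z).adjugate i j)
      = fun z => ((W z).updateRow j (Pi.single i 1)).det := by
    funext z
    rw [Matrix.adjugate_apply]
  rw [h]
  refine diffOn_det ?_
  rw [diffOn_matrix_iff]
  intro k l
  by_cases hk : k = j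
  · subst hk
    have : (fun z => (W z).updateRow k (Pi.single i 1) k l)
        = fun _ : ℂ => (Pi.single i (1:ℂ) : Fin n → ℂ) l := by
      funext z; rw [Matrix.updateRow_apply]; simp
    rw [this]
    exact differentiableOn_const _
  · have : (fun z => (W z).updateRow j (Pi.single i 1) k l) = fun z => W z k l := by
      funext z; rw [Matrix.updateRow_apply, if_neg hk]
    rw [this]
    exact diffOn_matrix_iff.mp hW _ _

lemma diffOn_inv_mat {W : ℂ → Mat} (hW : DifferentiableOn ℂ W s)
    (hdet : ∀ z ∈ s, (W z).det ≠ 0) :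
    DifferentiableOn ℂ (fun z => (W z)⁻¹) s := by
  have h : (fun z => (W z)⁻¹) = fun z => ((W z).det)⁻¹ • (W z).adjugate := by
    funext z
    rw [Matrix.inv_def, Ring.inverse_eq_inv']
  rw [h]
  exact diffOn_smul_mat ((diffOn_det hW).inv hdet) (diffOn_adjugate hW)

lemma diffOn_charpoly_coeff {W : ℂ → Mat} (hW : DifferentiableOn ℂ W s) (m : ℕ) :
    DifferentiableOn ℂ (fun z => (W z).charpoly.coeff m) s := by
  rcases Nat.eq_zero_or_pos n with h0 | h0
  · -- n = 0 : charpoly is constant 1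
    subst h0
    have : (fun z => (W z).charpoly.coeff m) = fun _ => (1 : ℂ[X]).coeff m := by
      funext z
      congr 1
      have hdeg : (W z).charpoly.natDegree = 0 := by
        simpa using (W z).charpoly_natDegree_eq_dim
      have hmon := (W z).charpoly_monic
      exact hmon.natDegree_eq_zero.mp hdeg
    rw [this]
    exact differentiableOn_const _
  haveI : Nonempty (Fin n) := Fin.pos_iff_nonempty.mp h0
  have key : ∀ z, (W z).charpoly.coeff m
      = ∑ i ∈ Finset.range (n + 1),
          ((i : ℂ) • (1 : Mat) - W z).det *
            (Lagrange.basis (Finset.range (n + 1)) (fun i : ℕ => (i : ℂ)) i).coeff m := by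
    intro z
    have hinj : Set.InjOn (fun i : ℕ => (i : ℂ)) (Finset.range (n + 1)) :=
      fun a _ b _ hab => Nat.cast_injective hab
    have hdeg : ((W z).charpoly).degree < (Finset.range (n + 1)).card := by
      rw [Finset.card_range]
      have h1 : ((W z).charpoly).degree = ((W z).charpoly).natDegree :=
        Polynomial.degree_eq_natDegree (W z).charpoly_monic.ne_zero
      rw [h1]
      have h2 : (W z).charpoly.natDegree = n := by
        simpa using (W z).charpoly_natDegree_eq_dim
      rw [h2]
      exact_mod_cast Nat.lt_succ_self n
    conv_lhs => rw [Lagrange.eq_interpolate hinj hdeg]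
    rw [Lagrange.interpolate_apply, Polynomial.finset_sum_coeff]
    refine Finset.sum_congr rfl fun i _ => ?_
    rw [Polynomial.coeff_C_mul, eval_charpoly]
  have h : (fun z => (W z).charpoly.coeff m)
      = fun z => ∑ i ∈ Finset.range (n + 1),
          ((i : ℂ) • (1 : Mat) - W z).det *
            (Lagrange.basis (Finset.range (n + 1)) (fun i : ℕ => (i : ℂ)) i).coeff m := by
    funext z; exact key z
  rw [h]
  refine DifferentiableOn.fun_sum fun i _ => ?_
  refine DifferentiableOn.mul_const ?_ _
  refine diffOn_det ?_
  rw [diffOn_matrix_iff]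
  intro k l
  have : (fun z => ((i : ℂ) • (1 : Mat) - W z) k l)
      = fun z => (i : ℂ) • (1 : Mat) k l - W z k l := by
    funext z
    rw [Matrix.sub_apply, Matrix.smul_apply]
  rw [this]
  exact (differentiableOn_const _).sub (diffOn_matrix_iff.mp hW _ _)

end SpecAux
namespace SpecAux

variable {n : ℕ}

local notation "Mat" => Matrix (Fin n) (Fin n) ℂ

lemma choose_le_two_pow (N k : ℕ) : N.choose k ≤ 2 ^ N := by
  rcases le_or_gt k N with h | h
  · calc N.choose k ≤ ∑ m ∈ Finset.range (N + 1), N.choose m :=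
        Finset.single_le_sum (fun i _ => Nat.zero_le _) (Finset.mem_range.mpr (by omega))
      _ = 2 ^ N := Nat.sum_range_choose N
  · rw [Nat.choose_eq_zero_of_lt h]
    exact Nat.zero_le _

lemma max_modulus {f : ℂ → ℂ} (hf : DifferentiableOn ℂ f (Metric.ball 0 1)) {ρ C : ℝ}
    (h0 : 0 < ρ) (h1 : ρ < 1) (hb : ∀ z : ℂ, ‖z‖ = ρ → ‖f z‖ ≤ C) {z₀ : ℂ}
    (hz : ‖z₀‖ < ρ) : ‖f z₀‖ ≤ C := by
  have hsub : Metric.closedBall (0 : ℂ) ρ ⊆ Metric.ball (0 : ℂ) 1 := by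
    intro x hx
    rw [Metric.mem_closedBall, dist_zero_right] at hx
    rw [Metric.mem_ball, dist_zero_right]
    exact lt_of_le_of_lt hx h1
  have hcl : closure (Metric.ball (0 : ℂ) ρ) = Metric.closedBall (0 : ℂ) ρ :=
    closure_ball (0 : ℂ) h0.ne'
  refine Complex.norm_le_of_forall_mem_frontier_norm_le (U := Metric.ball (0:ℂ) ρ)
    Metric.isBounded_ball ?_ ?_ ?_
  · refine ⟨hf.mono ?_, (hf.continuousOn).mono ?_⟩
    · exact fun x hx => hsub (Metric.ball_subset_closedBall hx)
    · rw [hcl]; exact hsub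
  · intro z hz'
    rw [frontier_ball (0 : ℂ) h0.ne'] at hz'
    rw [mem_sphere_zero_iff_norm] at hz'
    exact hb z hz'
  · rw [hcl, Metric.mem_closedBall, dist_zero_right]
    exact le_of_lt hz

lemma sRad_zero (hn : 0 < n) : sRad (0 : Mat) = 0 := by
  haveI : Nonempty (Fin n) := Fin.pos_iff_nonempty.mp hn
  have hspec : spectrum ℂ (0 : Mat) = {0} := by
    ext μ
    rw [mem_spectrum_iff_det]
    simp only [sub_zero, Matrix.det_smul, Matrix.det_one, mul_one, Fintype.card_fin,
      Set.mem_singleton_iff]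
    rw [pow_eq_zero_iff hn.ne']
  rw [sRad, hspec]
  simp

lemma norm_le_of_mem_spectrum_smul (hn : 0 < n) {c : ℂ} {V : Mat} {μ : ℂ}
    (h : μ ∈ spectrum ℂ (c • V)) : ‖μ‖ ≤ ‖c‖ * sRad V := by
  rcases eq_or_ne c 0 with rfl | hc
  · rw [zero_smul] at h
    have : μ = 0 := by
      have h2 := norm_le_sRad h
      rw [sRad_zero hn] at h2
      simpa using le_antisymm h2 (norm_nonneg μ)
    rw [this]
    simp
  · have hω : (c⁻¹ * μ) ∈ spectrum ℂ V := by
      have := (smul_mem_spectrum_smul (V := V) (μ := c⁻¹ * μ) hc)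
      apply this.mpr
      have : c * (c⁻¹ * μ) = μ := by field_simp
      rw [this]
      exact h
    have h2 := norm_le_sRad hω
    have h3 : ‖μ‖ = ‖c‖ * ‖c⁻¹ * μ‖ := by
      rw [norm_mul, norm_inv, ← mul_assoc, mul_inv_cancel₀ (norm_ne_zero_iff.mpr hc), one_mul]
    rw [h3]
    exact mul_le_mul_of_nonneg_left h2 (norm_nonneg c)

/-- The core Schwarz-type lemma: if `F` is holomorphic on the unit disc with values
in the spectral unit ball and `F 0 = 0`, then `sRad (F z) ≤ ‖z‖`. -/
lemma core (hn : 0 < n) {F : ℂ → Mat} (hd : DifferentiableOn ℂ F (Metric.ball 0 1))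
    (hF0 : F 0 = 0) (hr : ∀ z ∈ Metric.ball (0:ℂ) 1, sRad (F z) < 1) :
    ∀ z₀ ∈ Metric.ball (0:ℂ) 1, sRad (F z₀) ≤ ‖z₀‖ := by
  intro z₀ hz₀
  rcases eq_or_ne z₀ 0 with rfl | hz0
  · rw [hF0, sRad_zero hn]
    simp
  rw [Metric.mem_ball, dist_zero_right] at hz₀
  -- the analytic division `M z = F z / z`
  set M : ℂ → Mat := fun z => Matrix.of fun i j => dslope (fun w => F w i j) 0 z with hM
  have hMd : DifferentiableOn ℂ M (Metric.ball 0 1) := by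
    rw [diffOn_matrix_iff]
    intro i j
    have h : (fun z => M z i j) = dslope (fun w => F w i j) 0 := rfl
    rw [h, Complex.differentiableOn_dslope
      (IsOpen.mem_nhds Metric.isOpen_ball (Metric.mem_ball_self one_pos))]
    exact diffOn_matrix_iff.mp hd i j
  have hFM : ∀ z : ℂ, F z = z • M z := by
    intro z
    rcases eq_or_ne z 0 with rfl | hz
    · rw 
        [hF0, zero_smul]
    · ext i j
      rw [Matrix.smul_apply]
      have h1 : M z i j = (F z i j - F 0 i j) / z := by
        rw [hM]
        simp only [Matrix.of_apply]
        rw [dslope_of_ne _ hz, slope_def_field, sub_zero]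
      rw [h1, hF0]
      simp only [Matrix.zero_apply, sub_zero, smul_eq_mul]
      field_simp
  refine sRad_le (norm_nonneg z₀) ?_
  intro μ hμ
  set c : ℂ := z₀⁻¹ * μ with hc
  have hμc : μ = z₀ * c := by
    rw [hc]; field_simp
  have hcs : c ∈ spectrum ℂ (M z₀) := by
    refine (smul_mem_spectrum_smul (V := M z₀) (μ := c) hz0).mpr ?_
    rw [← hμc, ← hFM z₀]
    exact hμ
  suffices hcle : ‖c‖ ≤ 1 by
    rw [hμc, norm_mul]
    nlinarith [norm_nonneg z₀]
  by_contra hc1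
  push_neg at hc1
  -- choose radius ρ'
  set ρ : ℝ := max ‖z₀‖ ‖c‖⁻¹ with hρ
  have hcpos : (0:ℝ) < ‖c‖ := lt_trans one_pos hc1
  have hρlt : ρ < 1 := max_lt hz₀ (inv_lt_one_of_one_lt₀ hc1)
  set ρ' : ℝ := (ρ + 1) / 2 with hρ'
  have hρρ' : ρ < ρ' := by rw [hρ']; linarith
  have hρ'1 : ρ' < 1 := by rw [hρ']; linarith
  have hρ'0 : 0 < ρ' := by
    have h1 : ‖c‖⁻¹ ≤ ρ := le_max_right _ _
    have h2 : 0 < ‖c‖⁻¹ := inv_pos.mpr hcpos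
    linarith
  have hz₀ρ' : ‖z₀‖ < ρ' := lt_of_le_of_lt (le_max_left _ _) hρρ'
  have hτ : 1 < ρ' * ‖c‖ := by
    have h1 : ‖c‖⁻¹ < ρ' := lt_of_le_of_lt (le_max_right _ _) hρρ'
    calc (1:ℝ) = ‖c‖⁻¹ * ‖c‖ := by rw [inv_mul_cancel₀ hcpos.ne']
      _ < ρ' * ‖c‖ := by nlinarith
  obtain ⟨j, hj⟩ := pow_unbounded_of_one_lt ((n : ℝ) * 2 ^ n) hτ
  have hjne : j ≠ 0 := by
    intro h
    subst h
    simp only [pow_zero] at hj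
    have h1 : (1:ℝ) ≤ (n:ℝ) := by exact_mod_cast hn
    have h2 : (1:ℝ) ≤ 2 ^ n := one_le_pow₀ (by norm_num)
    nlinarith
  set V : Mat := (M z₀) ^ j with hV
  set u : ℝ := ρ' ^ j with hu
  have hupos : 0 < u := pow_pos hρ'0 j
  -- coefficient bounds via maximum modulus
  have hcoeff : ∀ i, i < n → ‖V.charpoly.coeff i‖ ≤ (n.choose (n - i)) * (u⁻¹) ^ (n - i) := by
    intro i hi
    have hdφ : DifferentiableOn ℂ (fun z => ((M z ^ j)).charpoly.coeff i)
        (Metric.ball 0 1) := diffOn_charpoly_coeff (diffOn_pow hMd j) i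
    refine max_modulus hdφ hρ'0 hρ'1 ?_ hz₀ρ'
    intro z hzρ
    have hzne : z ≠ 0 := by
      intro h; subst h; simp at hzρ; linarith
    have hzmem : z ∈ Metric.ball (0:ℂ) 1 := by
      rw [Metric.mem_ball, dist_zero_right, hzρ]
      exact hρ'1
    refine charpoly_coeff_norm_le hn ?_ hi
    intro ν hν
    obtain ⟨ω, hω, rfl⟩ := exists_of_mem_spectrum_pow hjne hν
    have hzω : z * ω ∈ spectrum ℂ (F z) := by
      rw [hFM z]
      exact (smul_mem_spectrum_smul hzne).mp hω
    have hlt : ‖z * ω‖ < 1 := norm_lt_one_of_sRad_lt_one (hr z hzmem) hzω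
    rw [norm_mul, hzρ] at hlt
    have hω' : ‖ω‖ ≤ ρ'⁻¹ := by
      rw [← one_div, le_div_iff₀ hρ'0]
      nlinarith
    rw [norm_pow]
    calc ‖ω‖ ^ j ≤ (ρ'⁻¹) ^ j := pow_le_pow_left₀ (norm_nonneg ω) hω' j
      _ = u⁻¹ := by rw [hu, inv_pow]
  -- c^j is a root of the characteristic polynomial of V
  have hcj : c ^ j ∈ spectrum ℂ V := pow_mem_spectrum_pow hcs j
  have hroot : V.charpoly.eval (c ^ j) = 0 := (mem_spectrum_iff_root _ _).mp hcj
  haveI : Nonempty (Fin n) := Fin.pos_iff_nonempty.mp hn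
  have hdeg : V.charpoly.natDegree = n := by simpa using V.charpoly_natDegree_eq_dim
  have hexp : (c ^ j) ^ n = -∑ i ∈ Finset.range n, V.charpoly.coeff i * (c ^ j) ^ i := by
    have h1 := Polynomial.eval_eq_sum_range (p := V.charpoly) (c ^ j)
    rw [hroot, hdeg, Finset.sum_range_succ] at h1
    have h2 : V.charpoly.coeff n = 1 := by
      have h3 := V.charpoly_monic.coeff_natDegree
      rw [hdeg] at h3
      exact h3
    rw [h2, one_mul] at h1
    linear_combination -h1
  set y : ℝ := ‖c‖ ^ j with hy
  have hyeq : ‖(c ^ j : ℂ)‖ = y := by rw [norm_pow]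
  have hynn : 0 ≤ y := pow_nonneg (norm_nonneg c) j
  have hnorm : y ^ n ≤ ∑ i ∈ Finset.range n,
      (n.choose (n - i) : ℝ) * (u⁻¹) ^ (n - i) * y ^ i := by
    have h1 : ‖((c ^ j) ^ n : ℂ)‖ ≤ ∑ i ∈ Finset.range n, ‖V.charpoly.coeff i * (c ^ j) ^ i‖ := by
      rw [hexp, norm_neg]
      exact norm_sum_le _ _
    rw [norm_pow, hyeq] at h1
    refine le_trans h1 (Finset.sum_le_sum fun i hi => ?_)
    rw [norm_mul, norm_pow, hyeq]
    exact mul_le_mul_of_nonneg_right (hcoeff i (Finset.mem_range.mp hi))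
      (pow_nonneg hynn i)
  set Y : ℝ := u * y with hYdef
  have hYeq : Y = (ρ' * ‖c‖) ^ j := by rw [hYdef, hu, hy, mul_pow]
  have hY1 : 1 < Y := by
    rw [hYeq]
    exact one_lt_pow₀ hτ hjne
  have hYpos : 0 < Y := lt_trans one_pos hY1
  have hstep : Y ^ n ≤ ∑ i ∈ Finset.range n, (n.choose (n - i) : ℝ) * Y ^ i := by
    have h2 := mul_le_mul_of_nonneg_left hnorm (le_of_lt (pow_pos hupos n))
    calc Y ^ n = u ^ n * y ^ n := by rw [hYdef, mul_pow]
      _ ≤ u ^ n * ∑ i ∈ Finset.range n,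
          (n.choose (n - i) : ℝ) * (u⁻¹) ^ (n - i) * y ^ i := h2
      _ = ∑ i ∈ Finset.range n, (n.choose (n - i) : ℝ) * Y ^ i := by
          rw [Finset.mul_sum]
          refine Finset.sum_congr rfl fun i hi => ?_
          have hin : i < n := Finset.mem_range.mp hi
          have hcanc : u ^ n * (u⁻¹) ^ (n - i) = u ^ i := by
            rw [inv_pow, mul_comm, inv_mul_eq_iff_eq_mul₀ (pow_ne_zero _ hupos.ne'), ← pow_add]
            congr 1
            omega
          calc u ^ n * ((n.choose (n - i) : ℝ) * (u⁻¹) ^ (n - i) * y ^ i)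
              = (n.choose (n - i) : ℝ) * (u ^ n * (u⁻¹) ^ (n - i)) * y ^ i := by ring
            _ = (n.choose (n - i) : ℝ) * u ^ i * y ^ i := by rw [hcanc]
            _ = (n.choose (n - i) : ℝ) * Y ^ i := by rw [hYdef, mul_pow]; ring
  have hbound : ∑ i ∈ Finset.range n, (n.choose (n - i) : ℝ) * Y ^ i
      ≤ (n : ℝ) * 2 ^ n * Y ^ (n - 1) := by
    have h3 : ∀ i ∈ Finset.range n,
        (n.choose (n - i) : ℝ) * Y ^ i ≤ (2 ^ n : ℝ) * Y ^ (n - 1) := by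
      intro i hi
      have hin : i < n := Finset.mem_range.mp hi
      have h4 : (n.choose (n - i) : ℝ) ≤ (2 ^ n : ℝ) := by
        exact_mod_cast choose_le_two_pow n (n - i)
      have h5 : Y ^ i ≤ Y ^ (n - 1) := pow_le_pow_right₀ (le_of_lt hY1) (by omega)
      have h6 : (0:ℝ) ≤ Y ^ i := pow_nonneg (le_of_lt hYpos) i
      nlinarith
    calc ∑ i ∈ Finset.range n, (n.choose (n - i) : ℝ) * Y ^ i
        ≤ ∑ _i ∈ Finset.range n, (2 ^ n : ℝ) * Y ^ (n - 1) := Finset.sum_le_sum h3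
      _ = (n : ℝ) * 2 ^ n * Y ^ (n - 1) := by
          rw [Finset.sum_const, Finset.card_range, nsmul_eq_mul]
          ring
  have hYn : Y ^ n = Y * Y ^ (n - 1) := by
    rw [← pow_succ']
    congr 1
    omega
  have h7 : Y * Y ^ (n - 1) ≤ ((n : ℝ) * 2 ^ n) * Y ^ (n - 1) := by
    rw [← hYn]
    exact le_trans hstep hbound
  have hYpowpos : 0 < Y ^ (n - 1) := pow_pos hYpos _
  have hYle : Y ≤ (n : ℝ) * 2 ^ n := le_of_mul_le_mul_right h7 hYpowpos
  rw [hYeq] at hYle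
  linarith

end SpecAux
namespace SpecAux

lemma real_factor_lower {D N x b r : ℝ} (hx0 : 0 ≤ x) (hx : x ≤ r) (hr1 : r < 1)
    (hb1 : b < 1) (hge : r ≤ b) (hb0 : 0 ≤ b) (hDlow : 1 - x * b ≤ D) (hDpos : 0 < D)
    (hN0 : 0 ≤ N) (hid : D ^ 2 - N ^ 2 = (1 - x ^ 2) * (1 - b ^ 2)) :
    (b - r) / (1 - r * b) ≤ N / D := by
  have hx1 : x < 1 := lt_of_le_of_lt hx hr1
  have hD1 : (0:ℝ) < 1 - x * b := by nlinarith
  have hDr : (0:ℝ) < 1 - r * b := by nlinarith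
  have hD2 : (1 - x * b) ^ 2 ≤ D ^ 2 := by nlinarith
  have hK0 : (0:ℝ) ≤ (1 - x ^ 2) * (1 - b ^ 2) :=
    mul_nonneg (by nlinarith) (by nlinarith)
  have hNsq : N ^ 2 = D ^ 2 - (1 - x ^ 2) * (1 - b ^ 2) := by linarith
  have key : (N * (1 - x * b)) ^ 2 - ((b - x) * D) ^ 2
      = (1 - x ^ 2) * (1 - b ^ 2) * (D ^ 2 - (1 - x * b) ^ 2) := by
    linear_combination (1 - x * b) ^ 2 * hNsq
  have hsq : ((b - x) * D) ^ 2 ≤ (N * (1 - x * b)) ^ 2 := by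
    have h5 := mul_nonneg hK0 (sub_nonneg.mpr hD2)
    linarith
  have hstep1 : (b - x) * D ≤ N * (1 - x * b) := by
    have hL0 : 0 ≤ (b - x) * D := mul_nonneg (by linarith) (le_of_lt hDpos)
    have hR0 : 0 ≤ N * (1 - x * b) := mul_nonneg hN0 (le_of_lt hD1)
    nlinarith [hsq]
  have hψx : (b - x) / (1 - x * b) ≤ N / D := by
    rw [div_le_div_iff₀ hD1 hDpos]
    exact hstep1
  have hψr : (b - r) / (1 - r * b) ≤ (b - x) / (1 - x * b) := by
    rw [div_le_div_iff₀ hDr hD1]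
    nlinarith [mul_nonneg (sub_nonneg.mpr hx) (by nlinarith : (0:ℝ) ≤ 1 - b * b)]
  exact le_trans hψr hψx

lemma real_factor_lt_one {D N x b : ℝ} (hx0 : 0 ≤ x) (hx1 : x < 1) (hb0 : 0 ≤ b)
    (hb1 : b < 1) (hDpos : 0 < D) (hN0 : 0 ≤ N)
    (hid : D ^ 2 - N ^ 2 = (1 - x ^ 2) * (1 - b ^ 2)) : N / D < 1 := by
  rw [div_lt_one hDpos]
  have hK : (0:ℝ) < (1 - x ^ 2) * (1 - b ^ 2) := mul_pos (by nlinarith) (by nlinarith)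
  nlinarith

lemma normSq_identity (a β : ℂ) :
    ‖1 - (starRingEnd ℂ) a * β‖ ^ 2 - ‖β - a‖ ^ 2 = (1 - ‖a‖ ^ 2) * (1 - ‖β‖ ^ 2) := by
  have h1 : ‖1 - (starRingEnd ℂ) a * β‖ ^ 2 = Complex.normSq (1 - (starRingEnd ℂ) a * β) := by
    rw [← Complex.sq_norm]
  have h2 : ‖β - a‖ ^ 2 = Complex.normSq (β - a) := by
    rw [← Complex.sq_norm]
  have h3 : ‖a‖ ^ 2 = Complex.normSq a := by rw [← Complex.sq_norm]
  have h4 : ‖β‖ ^ 2 = Complex.normSq β := by rw [← Complex.sq_norm]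
  rw [h1, h2, h3, h4]
  simp only [Complex.normSq_apply, Complex.sub_re, Complex.sub_im, Complex.mul_re,
    Complex.mul_im, Complex.one_re, Complex.one_im, Complex.conj_re, Complex.conj_im]
  ring

lemma denom_lower (a β : ℂ) : 1 - ‖a‖ * ‖β‖ ≤ ‖1 - (starRingEnd ℂ) a * β‖ := by
  have h1 : ‖(1:ℂ)‖ - ‖(starRingEnd ℂ) a * β‖ ≤ ‖1 - (starRingEnd ℂ) a * β‖ :=
    norm_sub_norm_le _ _
  rw [norm_one, norm_mul] at h1
  have h2 : ‖(starRingEnd ℂ) a‖ = ‖a‖ := RCLike.norm_conj a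
  rw [h2] at h1
  exact h1

lemma denom_pos {a β : ℂ} (ha : ‖a‖ < 1) (hβ : ‖β‖ < 1) :
    0 < ‖1 - (starRingEnd ℂ) a * β‖ := by
  have := denom_lower a β
  nlinarith [norm_nonneg a, norm_nonneg β]

lemma factor_lt_one {a β : ℂ} (ha : ‖a‖ < 1) (hβ : ‖β‖ < 1) :
    ‖(β - a) / (1 - (starRingEnd ℂ) a * β)‖ < 1 := by
  rw [norm_div]
  exact real_factor_lt_one (norm_nonneg a) ha (norm_nonneg β) hβ (denom_pos ha hβ)
    (norm_nonneg _) (normSq_identity a β)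

lemma factor_lower {a β : ℂ} {r : ℝ} (hx : ‖a‖ ≤ r) (hr1 : r < 1) (hβ : ‖β‖ < 1)
    (hge : r ≤ ‖β‖) :
    (‖β‖ - r) / (1 - r * ‖β‖) ≤ ‖(β - a) / (1 - (starRingEnd ℂ) a * β)‖ := by
  rw [norm_div]
  exact real_factor_lower (norm_nonneg a) hx hr1 hβ hge (norm_nonneg β)
    (denom_lower a β) (denom_pos (lt_of_le_of_lt hx hr1) hβ) (norm_nonneg _)
    (normSq_identity a β)

end SpecAux
namespace SpecAux

variable {n : ℕ}

local notation "Mat" => Matrix (Fin n) (Fin n) ℂ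

/-- The denominator polynomial of the Blaschke product attached to `A`. -/
noncomputable def Bq (A : Mat) : ℂ[X] :=
  ((minpoly ℂ A).roots.map fun a => 1 - C ((starRingEnd ℂ) a) * X).prod

/-- The Blaschke product of `A` applied to the matrix `W`. -/
noncomputable def Bmat (A W : Mat) : Mat :=
  Polynomial.aeval W (minpoly ℂ A) * (Polynomial.aeval W (Bq A))⁻¹

/-- The Blaschke product of `A` as a scalar function. -/
noncomputable def Bval (A : Mat) (β : ℂ) : ℂ :=
  ((minpoly ℂ A).roots.map fun a => (β - a) / (1 - (starRingEnd ℂ) a * β)).prod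

lemma minpoly_root_mem_spectrum (hn : 0 < n) {A : Mat} {a : ℂ}
    (ha : a ∈ (minpoly ℂ A).roots) : a ∈ spectrum ℂ A := by
  haveI : Nonempty (Fin n) := Fin.pos_iff_nonempty.mp hn
  have hint : IsIntegral ℂ A := IsIntegral.of_finite ℂ A
  have hmon := minpoly.monic hint
  have hroot : (minpoly ℂ A).IsRoot a := isRoot_of_mem_roots ha
  obtain ⟨h, hh⟩ := dvd_iff_isRoot.mpr hroot
  by_contra hspec
  rw [spectrum.mem_iff, not_not] at hspec
  have h0 : Polynomial.aeval A (minpoly ℂ A) = 0 := minpoly.aeval ℂ A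
  rw [hh, _root_.map_mul] at h0
  have ha' : Polynomial.aeval A (X - C a) = A - a • (1 : Mat) := by
    simp [Algebra.algebraMap_eq_smul_one]
  rw [ha'] at h0
  have hu : IsUnit (A - a • (1 : Mat)) := by
    have heq : A - a • (1 : Mat) = -((algebraMap ℂ Mat) a - A) := by
      rw [Algebra.algebraMap_eq_smul_one, neg_sub]
    rw [heq]
    exact hspec.neg
  have hzero : Polynomial.aeval A h = 0 := by
    refine hu.mul_left_cancel ?_
    rw [h0, mul_zero]
  have hne : h ≠ 0 := by
    intro h'
    rw [h', mul_zero] at hh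
    exact hmon.ne_zero hh
  have hdeglt : h.degree < (minpoly ℂ A).degree := by
    rw [hh, degree_mul, degree_X_sub_C, Polynomial.degree_eq_natDegree hne]
    norm_cast
    omega
  exact absurd (minpoly.degree_le_of_ne_zero ℂ A hne hzero) (not_le.mpr hdeglt)

lemma minpoly_roots_norm_le (hn : 0 < n) {A : Mat} {a : ℂ}
    (ha : a ∈ (minpoly ℂ A).roots) : ‖a‖ ≤ sRad A :=
  norm_le_sRad (minpoly_root_mem_spectrum hn ha)

lemma eval_Bq (A : Mat) (β : ℂ) :
    Polynomial.eval β (Bq A)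
      = ((minpoly ℂ A).roots.map fun a => 1 - (starRingEnd ℂ) a * β).prod := by
  rw [Bq, eval_multiset_prod, Multiset.map_map]
  congr 1
  apply Multiset.map_congr rfl
  intro a _
  simp

lemma eval_Bq_ne_zero (hn : 0 < n) {A : Mat} (hA : sRad A < 1) {β : ℂ} (hβ : ‖β‖ < 1) :
    Polynomial.eval β (Bq A) ≠ 0 := by
  rw [eval_Bq]
  refine Multiset.prod_ne_zero ?_
  rw [Multiset.mem_map]
  rintro ⟨a, ha, hzero⟩
  have ha1 : ‖a‖ < 1 := lt_of_le_of_lt (minpoly_roots_norm_le hn ha) hA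
  have : ‖(starRingEnd ℂ) a * β‖ < 1 := by
    rw [norm_mul, RCLike.norm_conj]
    nlinarith [norm_nonneg a, norm_nonneg β]
  have h1 : (1 : ℂ) ≠ (starRingEnd ℂ) a * β := by
    intro h
    rw [← h] at this
    simp at this
  exact (sub_ne_zero.mpr h1) hzero

lemma Bq_ne_zero (A : Mat) : Bq A ≠ 0 := by
  intro h
  have h1 : Polynomial.eval 0 (Bq A) = 0 := by rw [h]; simp
  rw [eval_Bq] at h1
  have h2 : ((minpoly ℂ A).roots.map fun a => 1 - (starRingEnd ℂ) a * (0:ℂ)).prod = 1 := by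
    have : ((minpoly ℂ A).roots.map fun a => 1 - (starRingEnd ℂ) a * (0:ℂ))
        = (minpoly ℂ A).roots.map fun _ => (1:ℂ) := by
      apply Multiset.map_congr rfl
      intro a _
      simp
    rw [this, Multiset.map_const', Multiset.prod_replicate, one_pow]
  rw [h2] at h1
  exact one_ne_zero h1

lemma det_aeval_Bq_ne_zero (hn : 0 < n) {A : Mat} (hA : sRad A < 1) {W : Mat}
    (hW : sRad W < 1) : (Polynomial.aeval W (Bq A)).det ≠ 0 := by
  rw [det_aeval W (Bq_ne_zero A)]
  refine mul_ne_zero (pow_ne_zero _ (leadingCoeff_ne_zero.mpr (Bq_ne_zero A))) ?_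
  refine Multiset.prod_ne_zero ?_
  rw [Multiset.mem_map]
  rintro ⟨β, hβ, hzero⟩
  -- β is a root of Bq A, hence ‖β‖ > 1 ; so β ∉ spectrum W and det ≠ 0
  have hβr : Polynomial.eval β (Bq A) = 0 := by
    have := isRoot_of_mem_roots hβ
    exact this
  have hβ1 : ¬ (‖β‖ < 1) := fun hc => eval_Bq_ne_zero hn hA hc hβr
  have hspec : β ∉ spectrum ℂ W := fun hc => hβ1 (norm_lt_one_of_sRad_lt_one hW hc)
  rw [mem_spectrum_iff_det'] at hspec
  exact hspec hzero

lemma aeval_Bq_isUnit (hn : 0 < n) {A : Mat} (hA : sRad A < 1) {W : Mat}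
    (hW : sRad W < 1) : IsUnit (Polynomial.aeval W (Bq A)) := by
  rw [Matrix.isUnit_iff_isUnit_det, isUnit_iff_ne_zero]
  exact det_aeval_Bq_ne_zero hn hA hW

lemma eval_minpoly_eq (hn : 0 < n) (A : Mat) (β : ℂ) :
    Polynomial.eval β (minpoly ℂ A)
      = ((minpoly ℂ A).roots.map fun a => β - a).prod := by
  haveI : Nonempty (Fin n) := Fin.pos_iff_nonempty.mp hn
  have hint : IsIntegral ℂ A := IsIntegral.of_finite ℂ A
  have hmon := minpoly.monic hint
  conv_lhs => rw [(IsAlgClosed.splits _).eq_prod_roots_of_monic hmon]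
  rw [eval_multiset_prod, Multiset.map_map]
  congr 1
  apply Multiset.map_congr rfl
  intro a _
  simp

lemma eval_minpoly_eq_Bval_mul (hn : 0 < n) {A : Mat} (hA : sRad A < 1) {β : ℂ}
    (hβ : ‖β‖ < 1) :
    Polynomial.eval β (minpoly ℂ A) = Bval A β * Polynomial.eval β (Bq A) := by
  rw [eval_minpoly_eq hn, Bval, eval_Bq, ← Multiset.prod_map_mul]
  congr 1
  apply Multiset.map_congr rfl
  intro a ha
  have ha1 : ‖a‖ < 1 := lt_of_le_of_lt (minpoly_roots_norm_le hn ha) hA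
  have hden : (1 - (starRingEnd ℂ) a * β) ≠ 0 := by
    have := denom_pos ha1 hβ
    intro h
    rw [h] at this
    simp at this
  field_simp
  exact (mul_div_cancel_right₀ _ (by rwa [mul_comm] at hden)).symm

end SpecAux
namespace SpecAux

variable {n : ℕ}

local notation "Mat" => Matrix (Fin n) (Fin n) ℂ

lemma roots_card (hn : 0 < n) (A : Mat) :
    Multiset.card (minpoly ℂ A).roots = (minpoly ℂ A).natDegree :=
  splits_iff_card_roots.mp (IsAlgClosed.splits _)

lemma minpoly_natDegree_pos (hn : 0 < n) (A : Mat) : 0 < (minpoly ℂ A).natDegree := by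
  haveI : Nonempty (Fin n) := Fin.pos_iff_nonempty.mp hn
  exact minpoly.natDegree_pos (IsIntegral.of_finite ℂ A)

lemma roots_ne_zero (hn : 0 < n) (A : Mat) : (minpoly ℂ A).roots ≠ 0 := by
  intro h
  have h1 := roots_card hn A
  rw [h] at h1
  simp only [Multiset.card_zero] at h1
  exact absurd h1.symm (Nat.pos_iff_ne_zero.mp (minpoly_natDegree_pos hn A))

lemma norm_Bval_lt_one (hn : 0 < n) {A : Mat} (hA : sRad A < 1) {β : ℂ}
    (hβ : ‖β‖ < 1) : ‖Bval A β‖ < 1 := by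
  rw [Bval, multiset_norm_prod, Multiset.map_map]
  refine multiset_prod_lt_one ?_ ?_
  · simp only [Ne, Multiset.map_eq_zero]
    exact roots_ne_zero hn A
  · intro x hx
    obtain ⟨a, ha, rfl⟩ := Multiset.mem_map.mp hx
    have ha1 : ‖a‖ < 1 := lt_of_le_of_lt (minpoly_roots_norm_le hn ha) hA
    exact ⟨norm_nonneg _, factor_lt_one ha1 hβ⟩

lemma Bval_pow_le (hn : 0 < n) {A : Mat} (hA : sRad A < 1) {β : ℂ}
    (hβ : ‖β‖ < 1) (hge : sRad A ≤ ‖β‖) :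
    ((‖β‖ - sRad A) / (1 - sRad A * ‖β‖)) ^ (minpoly ℂ A).natDegree ≤ ‖Bval A β‖ := by
  have hr0 : 0 ≤ sRad A := sRad_nonneg hn A
  have hψ0 : 0 ≤ (‖β‖ - sRad A) / (1 - sRad A * ‖β‖) := by
    apply div_nonneg (by linarith)
    nlinarith [norm_nonneg β]
  rw [Bval, multiset_norm_prod, Multiset.map_map]
  have hcard : Multiset.card (((minpoly ℂ A).roots).map
      (fun a => ‖(β - a) / (1 - (starRingEnd ℂ) a * β)‖)) = (minpoly ℂ A).natDegree := by
    rw [Multiset.card_map]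
    exact roots_card hn A
  rw [← hcard]
  refine pow_card_le_multiset_prod hψ0 ?_
  intro x hx
  obtain ⟨a, ha, rfl⟩ := Multiset.mem_map.mp hx
  exact factor_lower (minpoly_roots_norm_le hn ha) hA hβ hge

lemma aeval_sub_factor (A W : Mat) (ν : ℂ) :
    Polynomial.aeval W (C ν * Bq A - minpoly ℂ A)
      = ν • Polynomial.aeval W (Bq A) - Polynomial.aeval W (minpoly ℂ A) := by
  rw [map_sub, _root_.map_mul, aeval_C, Algebra.algebraMap_eq_smul_one, smul_mul_assoc, one_mul]

lemma sub_Bmat_factor (hn : 0 < n) {A W : Mat} (hA : sRad A < 1) (hW : sRad W < 1) (ν : ℂ) :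
    (algebraMap ℂ Mat) ν - Bmat A W
      = Polynomial.aeval W (C ν * Bq A - minpoly ℂ A) * (Polynomial.aeval W (Bq A))⁻¹ := by
  rw [aeval_sub_factor, Bmat, sub_mul, smul_mul_assoc,
    Matrix.mul_nonsing_inv _ ((Matrix.isUnit_iff_isUnit_det _).mp (aeval_Bq_isUnit hn hA hW)),
    Algebra.algebraMap_eq_smul_one]

lemma sRad_Bmat_lt_one (hn : 0 < n) {A W : Mat} (hA : sRad A < 1) (hW : sRad W < 1) :
    sRad (Bmat A W) < 1 := by
  refine sRad_lt_one hn ?_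
  intro ν hν
  rcases eq_or_ne ν 0 with rfl | hν0
  · simpa using one_pos
  set g : ℂ[X] := C ν * Bq A - minpoly ℂ A with hg
  have hQu : IsUnit (Polynomial.aeval W (Bq A)) := aeval_Bq_isUnit hn hA hW
  have hdet0 : (Polynomial.aeval W g).det = 0 := by
    by_contra hne
    have h1 : IsUnit ((algebraMap ℂ Mat) ν - Bmat A W) := by
      rw [sub_Bmat_factor hn hA hW ν]
      refine IsUnit.mul ((Matrix.isUnit_iff_isUnit_det _).mpr (isUnit_iff_ne_zero.mpr hne)) ?_
      rw [Matrix.isUnit_iff_isUnit_det, Matrix.det_nonsing_inv, isUnit_iff_ne_zero,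
        Ring.inverse_eq_inv']
      exact inv_ne_zero (det_aeval_Bq_ne_zero hn hA hW)
    exact (spectrum.mem_iff.mp hν) h1
  -- g is not the zero polynomial
  have hgne : g ≠ 0 := by
    intro h0
    obtain ⟨a₁, ha₁⟩ := Multiset.exists_mem_of_ne_zero (roots_ne_zero hn A)
    have ha₁1 : ‖a₁‖ < 1 := lt_of_le_of_lt (minpoly_roots_norm_le hn ha₁) hA
    have hev : Polynomial.eval a₁ g = 0 := by rw [h0]; simp
    rw [hg] at hev
    simp only [eval_sub, eval_mul, eval_C] at hev
    have hpz : Polynomial.eval a₁ (minpoly ℂ A) = 0 := isRoot_of_mem_roots ha₁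
    rw [hpz, sub_zero] at hev
    exact hν0 ((mul_eq_zero.mp hev).resolve_right (eval_Bq_ne_zero hn hA ha₁1))
  rw [det_aeval W hgne, mul_eq_zero] at hdet0
  rcases hdet0 with hlc | hprod
  · exact absurd hlc (pow_ne_zero _ (leadingCoeff_ne_zero.mpr hgne))
  rw [Multiset.prod_eq_zero_iff] at hprod
  obtain ⟨β, hβroot, hβdet⟩ := Multiset.mem_map.mp hprod
  have hβspec : β ∈ spectrum ℂ W := (mem_spectrum_iff_det' W β).mpr hβdet
  have hβ1 : ‖β‖ < 1 := norm_lt_one_of_sRad_lt_one hW hβspec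
  have hβev : Polynomial.eval β g = 0 := isRoot_of_mem_roots hβroot
  rw [hg] at hβev
  simp only [eval_sub, eval_mul, eval_C] at hβev
  rw [eval_minpoly_eq_Bval_mul hn hA hβ1] at hβev
  have hν : ν = Bval A β := by
    have hqne := eval_Bq_ne_zero hn hA hβ1
    rw [sub_eq_zero] at hβev
    exact mul_right_cancel₀ hqne hβev
  rw [hν]
  exact norm_Bval_lt_one hn hA hβ1

lemma Bval_mem_spectrum (hn : 0 < n) {A W : Mat} (hA : sRad A < 1) (hW : sRad W < 1)
    {μ : ℂ} (hμ : μ ∈ spectrum ℂ W) : Bval A μ ∈ spectrum ℂ (Bmat A W) := by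
  have hμ1 : ‖μ‖ < 1 := norm_lt_one_of_sRad_lt_one hW hμ
  set g : ℂ[X] := C (Bval A μ) * Bq A - minpoly ℂ A with hg
  have hgroot : g.IsRoot μ := by
    rw [hg, IsRoot, eval_sub, eval_mul, eval_C, eval_minpoly_eq_Bval_mul hn hA hμ1, sub_self]
  have hdet : (Polynomial.aeval W g).det = 0 := by
    obtain ⟨h, hh⟩ := dvd_iff_isRoot.mpr hgroot
    rw [hh, _root_.map_mul, Matrix.det_mul]
    have h1 : Polynomial.aeval W (X - C μ) = W - μ • (1 : Mat) := by
      simp [Algebra.algebraMap_eq_smul_one]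
    rw [h1, (mem_spectrum_iff_det' W μ).mp hμ, zero_mul]
  rw [spectrum.mem_iff]
  intro hunit
  have h2 := (Matrix.isUnit_iff_isUnit_det _).mp hunit
  rw [isUnit_iff_ne_zero] at h2
  apply h2
  rw [sub_Bmat_factor hn hA hW, Matrix.det_mul, hdet, zero_mul]

lemma Bmat_self_eq_zero (A : Mat) : Bmat A A = 0 := by
  rw [Bmat, minpoly.aeval, zero_mul]

lemma diffOn_Bmat {s : Set ℂ} {A : Mat} (hn : 0 < n) (hA : sRad A < 1)
    {Wf : ℂ → Mat} (hWf : DifferentiableOn ℂ Wf s)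
    (hWlt : ∀ z ∈ s, sRad (Wf z) < 1) :
    DifferentiableOn ℂ (fun z => Bmat A (Wf z)) s := by
  simp only [Bmat]
  exact diffOn_mul (diffOn_aeval hWf _)
    (diffOn_inv_mat (diffOn_aeval hWf _)
      (fun z hz => det_aeval_Bq_ne_zero hn hA (hWlt z hz)))

end SpecAux
open SpecAux in
/-- (Theorem 2) If `G : Ω_n → Ω_n` is holomorphic (`n ≥ 2`) and `d_G` is the degree of
the minimal polynomial of `G(0)`, then for every `X ∈ Ω_n`:
`r(G(X)) ≤ (r(X)^{1/d_G} + r(G(0))) / (1 + r(G(0))·r(X)^{1/d_G})`. -/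
theorem stmt18 {n : ℕ} (hn : 2 ≤ n)
    (G : Matrix (Fin n) (Fin n) ℂ → Matrix (Fin n) (Fin n) ℂ)
    (hol : DifferentiableOn ℂ G (specBall n))
    (hmap : Set.MapsTo G (specBall n) (specBall n)) :
    ∀ X ∈ specBall n,
      sRad (G X) ≤
        (sRad X ^ ((1 : ℝ) / (minpoly ℂ (G 0)).natDegree) + sRad (G 0)) /
          (1 + sRad (G 0) * sRad X ^ ((1 : ℝ) / (minpoly ℂ (G 0)).natDegree)) := by
  intro X hX
  have hn0 : 0 < n := by omega
  haveI : Nonempty (Fin n) := Fin.pos_iff_nonempty.mp hn0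
  have h0ball : (0 : Matrix (Fin n) (Fin n) ℂ) ∈ specBall n := by
    show sRad (0 : Matrix (Fin n) (Fin n) ℂ) < 1
    rw [sRad_zero hn0]
    norm_num
  set A : Matrix (Fin n) (Fin n) ℂ := G 0 with hAdef
  have hA : sRad A < 1 := hmap h0ball
  have hX1 : sRad X < 1 := hX
  have hGX : sRad (G X) < 1 := hmap hX
  set d : ℕ := (minpoly ℂ A).natDegree with hd
  have hdpos : 0 < d := minpoly_natDegree_pos hn0 A
  set rA : ℝ := sRad A with hrA
  have hrA0 : 0 ≤ rA := sRad_nonneg hn0 A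
  set t : ℝ := sRad X ^ ((1 : ℝ) / d) with ht
  have hX0 : 0 ≤ sRad X := sRad_nonneg hn0 X
  have ht0 : 0 ≤ t := Real.rpow_nonneg hX0 _
  have htd : t ^ d = sRad X := by
    rw [ht, one_div]
    exact Real.rpow_inv_natCast_pow hX0 (Nat.pos_iff_ne_zero.mp hdpos)
  have hden : 0 < 1 + rA * t := by nlinarith
  -- main eigenvalue-wise bound through the Blaschke product
  have hBle : ∀ μ ∈ spectrum ℂ (G X), ‖Bval A μ‖ ≤ sRad X := by
    intro μ hμ
    have hstep : ∀ s : ℝ, sRad X < s → s < 1 → ‖Bval A μ‖ ≤ s := by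
      intro s hs1 hs2
      have hs0 : 0 < s := lt_of_le_of_lt hX0 hs1
      have hsC : ((s : ℝ) : ℂ) ≠ 0 := by
        exact_mod_cast hs0.ne'
      set inner : ℂ → Matrix (Fin n) (Fin n) ℂ := fun z => (z * ((s : ℝ) : ℂ)⁻¹) • X
        with hinnerdef
      have hmaps : ∀ z ∈ Metric.ball (0:ℂ) 1, sRad (inner z) < 1 := by
        intro z hz
        rw [Metric.mem_ball, dist_zero_right] at hz
        have hb : sRad (inner z) ≤ ‖z * ((s : ℝ) : ℂ)⁻¹‖ * sRad X := by
          refine sRad_le (mul_nonneg (norm_nonneg _) hX0) ?_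
          intro ν hν
          exact norm_le_of_mem_spectrum_smul hn0 hν
        refine lt_of_le_of_lt hb ?_
        rw [norm_mul, norm_inv]
        have hsnorm : ‖((s : ℝ) : ℂ)‖ = s := by
          rw [Complex.norm_real]
          exact Real.norm_of_nonneg hs0.le
        rw [hsnorm]
        have h1 : ‖z‖ * s⁻¹ < s⁻¹ := by
          apply mul_lt_of_lt_one_left (inv_pos.mpr hs0) hz
        have h2 : 0 ≤ ‖z‖ * s⁻¹ := mul_nonneg (norm_nonneg z) (inv_pos.mpr hs0).le
        calc ‖z‖ * s⁻¹ * sRad X ≤ s⁻¹ * sRad X := by nlinarith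
          _ < s⁻¹ * s := by
              apply mul_lt_mul_of_pos_left hs1 (inv_pos.mpr hs0)
          _ = 1 := inv_mul_cancel₀ hs0.ne'
      have hinner : DifferentiableOn ℂ inner (Metric.ball 0 1) := by
        rw [diffOn_matrix_iff]
        intro i j
        have h : (fun z => inner z i j) = fun z => z * ((s : ℝ) : ℂ)⁻¹ * X i j := by
          funext z
          rw [hinnerdef]
          simp [Matrix.smul_apply]
        rw [h]
        exact (differentiableOn_id.mul_const _).mul_const _
      have hWf : DifferentiableOn ℂ (fun z => G (inner z)) (Metric.ball 0 1) := by
        refine DifferentiableOn.comp hol hinner ?_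
        intro z hz
        exact hmaps z hz
      set F : ℂ → Matrix (Fin n) (Fin n) ℂ := fun z => Bmat A (G (inner z)) with hF
      have hdiff : DifferentiableOn ℂ F (Metric.ball 0 1) :=
        diffOn_Bmat hn0 hA hWf (fun z hz => hmap (hmaps z hz))
      have hF0 : F 0 = 0 := by
        show Bmat A (G (inner 0)) = 0
        have h0 : inner 0 = 0 := by
          rw [hinnerdef]
          simp
        rw [h0, ← hAdef]
        exact Bmat_self_eq_zero A
      have hFr : ∀ z ∈ Metric.ball (0:ℂ) 1, sRad (F z) < 1 := fun z hz =>
        sRad_Bmat_lt_one hn0 hA (hmap (hmaps z hz))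
      have hsmem : ((s : ℝ) : ℂ) ∈ Metric.ball (0:ℂ) 1 := by
        rw [Metric.mem_ball, dist_zero_right, Complex.norm_real, Real.norm_of_nonneg hs0.le]
        exact hs2
      have hcore := core hn0 hdiff hF0 hFr ((s : ℝ) : ℂ) hsmem
      have hFs : F ((s : ℝ) : ℂ) = Bmat A (G X) := by
        show Bmat A (G (inner ((s : ℝ) : ℂ))) = Bmat A (G X)
        have h6 : inner ((s : ℝ) : ℂ) = X := by
          rw [hinnerdef]
          simp only [mul_inv_cancel₀ hsC, one_smul]
        rw [h6]
      have hmem : Bval A μ ∈ spectrum ℂ (F ((s : ℝ) : ℂ)) := by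
        rw [hFs]
        exact Bval_mem_spectrum hn0 hA hGX hμ
      have h5 := le_trans (norm_le_sRad hmem) hcore
      rw [Complex.norm_real, Real.norm_of_nonneg hs0.le] at h5
      exact h5
    by_contra hcon
    push_neg at hcon
    set m : ℝ := min ‖Bval A μ‖ 1 with hm
    have hm1 : sRad X < m := lt_min hcon hX1
    set s₀ : ℝ := (sRad X + m) / 2 with hs₀
    have hs₀1 : sRad X < s₀ := by
      rw [hs₀]; linarith
    have hs₀m : s₀ < m := by
      rw [hs₀]; linarith
    have hs₀lt1 : s₀ < 1 := lt_of_lt_of_le hs₀m (min_le_right _ _)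
    have := hstep s₀ hs₀1 hs₀lt1
    have hfin : s₀ < ‖Bval A μ‖ := lt_of_lt_of_le hs₀m (min_le_left _ _)
    linarith
  -- conclude
  refine Real.sSup_le ?_ ?_
  · rintro x ⟨μ, hμ, rfl⟩
    by_cases hcase : ‖μ‖ ≤ rA
    · refine le_trans hcase ?_
      rw [le_div_iff₀ hden]
      nlinarith [mul_nonneg (mul_nonneg (sub_nonneg.mpr hA.le)
        (by linarith : (0:ℝ) ≤ 1 + rA)) ht0]
    · push_neg at hcase
      have hμ1 : ‖μ‖ < 1 := norm_lt_one_of_sRad_lt_one hGX hμ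
      have hψ := Bval_pow_le hn0 hA hμ1 (le_of_lt hcase)
      have hle := hBle μ hμ
      have hψt : (‖μ‖ - rA) / (1 - rA * ‖μ‖) ≤ t := by
        have h2 : ((‖μ‖ - rA) / (1 - rA * ‖μ‖)) ^ d ≤ t ^ d := by
          rw [htd]
          exact le_trans hψ hle
        exact le_of_pow_le_pow_left₀ (Nat.pos_iff_ne_zero.mp hdpos) ht0 h2
      have hd2 : 0 < 1 - rA * ‖μ‖ := by nlinarith
      rw [div_le_iff₀ hd2] at hψt
      rw [le_div_iff₀ hden]
      nlinarith
  · refine div_nonneg (by linarith) hden.le
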